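/- With $\mathcal{G}$, $\pi_{\mathcal{G}}$ as in the stopping-cube construction for $(g,\omega)$ with $g=(a_Q1_Q)_Q$, $a_Q\ge 0$: for every $G\in\mathcal{G}$ the truncated sequence $g_G := (a_Q 1_Q)_{Q\in\mathcal{D}:\,\pi_{\mathcal{G}}(Q)=G}$ satisfies $\|g_G\|_{L^\infty_{\ell^{r'}}(\omega)} \le 2\, \langle \|g\|_{\ell^{r'}}\rangle^{\omega}_{G}$. -/

import Mathlib

open MeasureTheory ENNReal Set
open scoped Classical ENNReal NNReal

noncomputable section

/-- A dyadic cube in `ℝ^d`, given by a scale `k` and corner indices `n`. -/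
structure DyadicCube (d : ℕ) where
  k : ℤ
  n : Fin d → ℤ

namespace DyadicCube

variable {d : ℕ}

/-- The underlying set of a dyadic cube. -/
def toSet (Q : DyadicCube d) : Set (Fin d → ℝ) :=
  {x | ∀ i, (Q.n i : ℝ) * 2 ^ Q.k ≤ x i ∧ x i < ((Q.n i : ℝ) + 1) * 2 ^ Q.k}

instance : Countable (DyadicCube d) :=
  Countable.of_equiv (ℤ × (Fin d → ℤ))
    { toFun := fun p => ⟨p.1, p.2⟩
      invFun := fun Q => (Q.k, Q.n)
      left_inv := fun _ => rfl
      right_inv := fun _ => rfl }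

/-- The Lebesgue measure of a dyadic cube. -/
def vol (Q : DyadicCube d) : ℝ≥0∞ := volume Q.toSet

end DyadicCube

/-- Average of `f` over `A` with respect to `μ` (with the convention `0/0 = 0`). -/
def avgOn {α : Type*} [MeasurableSpace α] (μ : Measure α) (A : Set α) (f : α → ℝ≥0∞) : ℝ≥0∞ :=
  (∫⁻ x in A, f x ∂μ) / μ A

/-- `ℓ^r`-norm of a family of extended nonnegative reals, `1 ≤ r ≤ ∞`. -/
def lNorm {ι : Type*} (r : ℝ≥0∞) (a : ι → ℝ≥0∞) : ℝ≥0∞ :=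
  if r = ∞ then ⨆ i, a i else (∑' i, a i ^ r.toReal) ^ (1 / r.toReal)

/-- `L^p(μ)`-norm (lintegral version, for `ℝ≥0∞`-valued functions). -/
def lpNorm {α : Type*} [MeasurableSpace α] (p : ℝ) (μ : Measure α) (f : α → ℝ≥0∞) : ℝ≥0∞ :=
  (∫⁻ x, f x ^ p ∂μ) ^ (1 / p)

/-- `L^p_{ℓ^r}(μ)`-norm of a sequence-valued function. -/
def lpLrNorm {α ι : Type*} [MeasurableSpace α] (p : ℝ) (r : ℝ≥0∞) (μ : Measure α)
    (g : ι → α → ℝ≥0∞) : ℝ≥0∞ :=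
  lpNorm p μ (fun x => lNorm r (fun i => g i x))

/-- `L^∞_{ℓ^{r'}}(μ)`-norm of a sequence-valued function. -/
def linfLrNorm {α ι : Type*} [MeasurableSpace α] (r' : ℝ≥0∞) (μ : Measure α)
    (g : ι → α → ℝ≥0∞) : ℝ≥0∞ :=
  essSup (fun x => lNorm r' (fun i => g i x)) μ

namespace DyadicCube

variable {d : ℕ}

/-- The measure `w dx` with density `w`. -/
def wM (w : (Fin d → ℝ) → ℝ≥0∞) : Measure (Fin d → ℝ) := volume.withDensity w

/-- Component `Q` of `T(fμ)`, namely `λ_Q ⟨fμ⟩_Q 1_Q`. -/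
def Tcomp (lam : DyadicCube d → ℝ≥0) (μ : Measure (Fin d → ℝ)) (f : (Fin d → ℝ) → ℝ≥0∞)
    (Q : DyadicCube d) (x : Fin d → ℝ) : ℝ≥0∞ :=
  Q.toSet.indicator (fun _ => (lam Q : ℝ≥0∞) * ((∫⁻ y in Q.toSet, f y ∂μ) / Q.vol)) x

/-- Component `Q` of the localized operator `T_R(fμ)`. -/
def TlocComp (lam : DyadicCube d → ℝ≥0) (μ : Measure (Fin d → ℝ)) (f : (Fin d → ℝ) → ℝ≥0∞)
    (R Q : DyadicCube d) (x : Fin d → ℝ) : ℝ≥0∞ :=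
  if Q.toSet ⊆ R.toSet then Tcomp lam μ f Q x else 0

/-- `T^*(gμ) = ∑_Q λ_Q ⟨g_Q μ⟩_Q 1_Q`. -/
def Tstar (lam : DyadicCube d → ℝ≥0) (μ : Measure (Fin d → ℝ))
    (g : DyadicCube d → (Fin d → ℝ) → ℝ≥0∞) (x : Fin d → ℝ) : ℝ≥0∞ :=
  ∑' Q : DyadicCube d,
    Q.toSet.indicator (fun _ => (lam Q : ℝ≥0∞) * ((∫⁻ y in Q.toSet, g Q y ∂μ) / Q.vol)) x

/-- `T^*_R(gμ) = ∑_{Q ⊆ R} λ_Q ⟨g_Q μ⟩_Q 1_Q`. -/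
def TstarLoc (lam : DyadicCube d → ℝ≥0) (μ : Measure (Fin d → ℝ))
    (g : DyadicCube d → (Fin d → ℝ) → ℝ≥0∞) (R : DyadicCube d) (x : Fin d → ℝ) : ℝ≥0∞ :=
  ∑' Q : DyadicCube d,
    if Q.toSet ⊆ R.toSet then
      Q.toSet.indicator (fun _ => (lam Q : ℝ≥0∞) * ((∫⁻ y in Q.toSet, g Q y ∂μ) / Q.vol)) x
    else 0

/-- The piecewise constant sequence `(a_Q 1_Q)_Q`. -/
def gPC (a : DyadicCube d → ℝ≥0) (Q : DyadicCube d) (x : Fin d → ℝ) : ℝ≥0∞ :=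
  Q.toSet.indicator (fun _ => (a Q : ℝ≥0∞)) x

/-- Maximal proper dyadic subcubes `G'` of `G` satisfying `P G G'`. -/
def maxSubcubes (P : DyadicCube d → DyadicCube d → Prop) (G : DyadicCube d) :
    Set (DyadicCube d) :=
  {G' | G'.toSet ⊂ G.toSet ∧ P G G' ∧
    ∀ G'' : DyadicCube d, G'.toSet ⊆ G''.toSet → G''.toSet ⊂ G.toSet → P G G'' →
      G''.toSet = G'.toSet}

/-- Generations of stopping cubes. -/
def stopGen (P : DyadicCube d → DyadicCube d → Prop) (Q0 : DyadicCube d) :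
    ℕ → Set (DyadicCube d)
  | 0 => {Q0}
  | j + 1 => {G' | ∃ G ∈ stopGen P Q0 j, G' ∈ maxSubcubes P G}

/-- The family of stopping cubes generated from `Q0` by the stopping condition `P`. -/
def stopFam (P : DyadicCube d → DyadicCube d → Prop) (Q0 : DyadicCube d) :
    Set (DyadicCube d) :=
  ⋃ j : ℕ, stopGen P Q0 j

/-- The part of a stopping cube `G` not covered by its stopping children. -/
def stopE (P : DyadicCube d → DyadicCube d → Prop) (G : DyadicCube d) : Set (Fin d → ℝ) :=
  G.toSet \ ⋃ G' ∈ maxSubcubes P G, G'.toSet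

/-- `G` is the minimal cube of the family `𝒢` containing `R`, i.e. `G = π_𝒢(R)`. -/
def IsPrincipal (𝒢 : Set (DyadicCube d)) (R G : DyadicCube d) : Prop :=
  G ∈ 𝒢 ∧ R.toSet ⊆ G.toSet ∧ ∀ G' ∈ 𝒢, R.toSet ⊆ G'.toSet → G.toSet ⊆ G'.toSet

/-- Pointwise `ℓ^{r'}`-norm of `(a_Q 1_Q)_{Q ∈ D}`. -/
def gNormFn (r' : ℝ≥0∞) (D : Finset (DyadicCube d)) (a : DyadicCube d → ℝ≥0)
    (x : Fin d → ℝ) : ℝ≥0∞ :=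
  lNorm r' (fun Q : DyadicCube d => if Q ∈ D then gPC a Q x else 0)

/-- `ℓ^{r'}`-norm of the tail `(a_Q)_{Q ∈ D, Q ⊇ R}`. -/
def gTail (r' : ℝ≥0∞) (D : Finset (DyadicCube d)) (a : DyadicCube d → ℝ≥0)
    (R : DyadicCube d) : ℝ≥0∞ :=
  lNorm r' (fun Q : DyadicCube d => if Q ∈ D ∧ R.toSet ⊆ Q.toSet then (a Q : ℝ≥0∞) else 0)

/-- The stopping condition for the pair `(g, ω)` with `g = (a_Q 1_Q)_{Q ∈ D}`. -/
def gCond (ω : Measure (Fin d → ℝ)) (r' : ℝ≥0∞) (D : Finset (DyadicCube d))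
    (a : DyadicCube d → ℝ≥0) (G G' : DyadicCube d) : Prop :=
  2 * avgOn ω G.toSet (gNormFn r' D a) < gTail r' D a G'

/-- The stopping condition for the pair `(f, σ)`. -/
def fCond (σ : Measure (Fin d → ℝ)) (f : (Fin d → ℝ) → ℝ≥0∞) (F F' : DyadicCube d) : Prop :=
  2 * avgOn σ F.toSet f < avgOn σ F'.toSet f

end DyadicCube

open DyadicCube

lemma measurableSet_toSet' {d : ℕ} (Q : DyadicCube d) : MeasurableSet Q.toSet := by
  have : Q.toSet = Set.pi Set.univ
      (fun i => Set.Ico ((Q.n i : ℝ) * 2 ^ Q.k) (((Q.n i : ℝ) + 1) * 2 ^ Q.k)) := by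
    ext x; simp [DyadicCube.toSet, Set.mem_pi, Set.mem_Ico]
  rw [this]
  exact MeasurableSet.univ_pi fun i => measurableSet_Ico

lemma dyadic_subset {d : ℕ} {Q1 Q2 : DyadicCube d} {x : Fin d → ℝ}
    (h1 : x ∈ Q1.toSet) (h2 : x ∈ Q2.toSet) (hk : Q1.k ≤ Q2.k) :
    Q1.toSet ⊆ Q2.toSet := by
  intro y hy i
  obtain ⟨l1, u1⟩ := h1 i
  obtain ⟨l2, u2⟩ := h2 i
  obtain ⟨ly, uy⟩ := hy i
  have hc : (0:ℝ) < 2 ^ Q1.k := by positivity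
  set m : ℕ := (Q2.k - Q1.k).toNat with hm
  have hkm : Q2.k = (m : ℤ) + Q1.k := by omega
  have e1 : ((Q2.n i : ℝ)) * 2 ^ Q2.k = ((Q2.n i * 2 ^ m : ℤ) : ℝ) * 2 ^ Q1.k := by
    rw [hkm, zpow_add₀ (by norm_num : (2:ℝ) ≠ 0)]
    push_cast [zpow_natCast]; ring
  have e2 : ((Q2.n i : ℝ) + 1) * 2 ^ Q2.k = ((Q2.n i * 2 ^ m + 2 ^ m : ℤ) : ℝ) * 2 ^ Q1.k := by
    rw [hkm, zpow_add₀ (by norm_num : (2:ℝ) ≠ 0)]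
    push_cast [zpow_natCast]; ring
  rw [e1] at l2
  rw [e2] at u2
  have hA : Q2.n i * 2 ^ m ≤ Q1.n i := by
    have : ((Q2.n i * 2 ^ m : ℤ) : ℝ) * 2 ^ Q1.k < ((Q1.n i : ℝ) + 1) * 2 ^ Q1.k :=
      lt_of_le_of_lt l2 u1
    have hr : ((Q2.n i * 2 ^ m : ℤ) : ℝ) < (Q1.n i : ℝ) + 1 := lt_of_mul_lt_mul_right this hc.le
    have : (Q2.n i * 2 ^ m : ℤ) < Q1.n i + 1 := by exact_mod_cast hr
    omega
  have hB : Q1.n i + 1 ≤ Q2.n i * 2 ^ m + 2 ^ m := by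
    have : ((Q1.n i : ℝ)) * 2 ^ Q1.k < ((Q2.n i * 2 ^ m + 2 ^ m : ℤ) : ℝ) * 2 ^ Q1.k :=
      lt_of_le_of_lt l1 u2
    have hr : (Q1.n i : ℝ) < ((Q2.n i * 2 ^ m + 2 ^ m : ℤ) : ℝ) := lt_of_mul_lt_mul_right this hc.le
    have : Q1.n i < Q2.n i * 2 ^ m + 2 ^ m := by exact_mod_cast hr
    omega
  constructor
  · rw [e1]
    calc ((Q2.n i * 2 ^ m : ℤ) : ℝ) * 2 ^ Q1.k ≤ (Q1.n i : ℝ) * 2 ^ Q1.k := by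
          apply mul_le_mul_of_nonneg_right _ hc.le
          exact_mod_cast hA
      _ ≤ y i := ly
  · rw [e2]
    calc y i < ((Q1.n i : ℝ) + 1) * 2 ^ Q1.k := uy
      _ ≤ ((Q2.n i * 2 ^ m + 2 ^ m : ℤ) : ℝ) * 2 ^ Q1.k := by
          apply mul_le_mul_of_nonneg_right _ hc.le
          have : ((Q1.n i + 1 : ℤ) : ℝ) ≤ ((Q2.n i * 2 ^ m + 2 ^ m : ℤ) : ℝ) := by
            exact_mod_cast hB
          push_cast at this ⊢; linarith

lemma lNorm_mono {ι : Type*} {r : ℝ≥0∞} {f g : ι → ℝ≥0∞} (h : ∀ i, f i ≤ g i) :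
    lNorm r f ≤ lNorm r g := by
  unfold lNorm
  split_ifs
  · exact iSup_mono h
  · exact ENNReal.rpow_le_rpow
      (ENNReal.tsum_le_tsum fun i => ENNReal.rpow_le_rpow (h i) ENNReal.toReal_nonneg)
      (by positivity)

lemma lNorm_zero' {ι : Type*} {r : ℝ≥0∞} (hr : 1 ≤ r) :
    lNorm r (fun _ : ι => (0:ℝ≥0∞)) = 0 := by
  unfold lNorm
  split_ifs with h
  · simp
  · have hp : 0 < r.toReal :=
      ENNReal.toReal_pos (lt_of_lt_of_le zero_lt_one hr).ne' h
    simp only [ENNReal.zero_rpow_of_pos hp, tsum_zero,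
      ENNReal.zero_rpow_of_pos (one_div_pos.mpr hp)]

lemma le_avgOn {α : Type*} [MeasurableSpace α] {μ : Measure α} {A : Set α}
    (hA : MeasurableSet A) (h0 : μ A ≠ 0) (hfin : μ A ≠ ∞) {c : ℝ≥0∞} {f : α → ℝ≥0∞}
    (h : ∀ y ∈ A, c ≤ f y) : c ≤ avgOn μ A f := by
  rw [avgOn, ENNReal.le_div_iff_mul_le (Or.inl h0) (Or.inl hfin)]
  calc c * μ A = ∫⁻ _ in A, c ∂μ := (setLIntegral_const A c).symm
    _ ≤ ∫⁻ y in A, f y ∂μ := setLIntegral_mono' hA h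

lemma gTail_le_gNormFn {d : ℕ} (r' : ℝ≥0∞) (D : Finset (DyadicCube d))
    (a : DyadicCube d → ℝ≥0) {R : DyadicCube d} {y : Fin d → ℝ} (hy : y ∈ R.toSet) :
    gTail r' D a R ≤ gNormFn r' D a y := by
  simp only [gTail, gNormFn]
  apply lNorm_mono
  intro Q
  by_cases h : Q ∈ D ∧ R.toSet ⊆ Q.toSet
  · rw [if_pos h, if_pos h.1]
    simp only [gPC, Set.indicator_of_mem (h.2 hy)]
    exact le_rfl
  · rw [if_neg h]; exact zero_le


/-- **Stopping property (b5).** For every stopping cube `G ∈ 𝒢`, the truncated sequence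
`g_G = (a_Q 1_Q)_{π_𝒢(Q) = G}` satisfies `‖g_G‖_{L^∞_{ℓ^{r'}}(ω)} ≤ 2⟨‖g‖_{ℓ^{r'}}⟩^ω_G`. -/
theorem stopping_property_b5
    {d : ℕ} (r' : ℝ≥0∞) (hr' : 1 ≤ r')
    (ω : Measure (Fin d → ℝ))
    (hω : ∀ Q : DyadicCube d, 0 < ω Q.toSet ∧ ω Q.toSet < ∞)
    (Q0 : DyadicCube d) (D : Finset (DyadicCube d))
    (hD : ∀ Q ∈ D, Q.toSet ⊆ Q0.toSet)
    (a : DyadicCube d → ℝ≥0) :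
    ∀ G ∈ stopFam (gCond ω r' D a) Q0,
      essSup (fun x => lNorm r' (fun Q : DyadicCube d =>
          if Q ∈ D ∧ IsPrincipal (stopFam (gCond ω r' D a) Q0) Q G then gPC a Q x else 0)) ω
        ≤ 2 * avgOn ω G.toSet (gNormFn r' D a) := by
  intro G hG
  obtain ⟨j, hGj⟩ := Set.mem_iUnion.1 hG
  have key : ∀ R : DyadicCube d, ∀ x, x ∈ R.toSet →
      IsPrincipal (stopFam (gCond ω r' D a) Q0) R G →
      gTail r' D a R ≤ 2 * avgOn ω G.toSet (gNormFn r' D a) := by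
    intro R x hxR hPrin
    by_contra hlt
    push_neg at hlt
    obtain ⟨hGfam, hRG, hmin⟩ := hPrin
    by_cases heq : R.toSet = G.toSet
    · have h1 : gTail r' D a R ≤ avgOn ω G.toSet (gNormFn r' D a) := by
        apply le_avgOn (measurableSet_toSet' G) (hω G).1.ne' (hω G).2.ne
        intro y hy
        exact gTail_le_gNormFn r' D a (heq ▸ hy)
      exact absurd hlt
        (not_lt.2 (h1.trans (le_mul_of_one_le_left (zero_le) one_le_two)))
    · have hxG : x ∈ G.toSet := hRG hxR
      have hbd : ∀ G'' : DyadicCube d,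
          (R.toSet ⊆ G''.toSet ∧ G''.toSet ⊂ G.toSet ∧ gCond ω r' D a G G'') → G''.k ≤ G.k := by
        rintro G'' ⟨hsub, hss, -⟩
        by_contra hk2
        push_neg at hk2
        exact hss.not_subset (dyadic_subset hxG (hsub hxR) hk2.le)
      obtain ⟨kk, ⟨G', hG'T, hG'k⟩, hkmax⟩ :=
        Int.exists_greatest_of_bdd
          (P := fun z => ∃ G'' : DyadicCube d,
            (R.toSet ⊆ G''.toSet ∧ G''.toSet ⊂ G.toSet ∧ gCond ω r' D a G G'') ∧ G''.k = z)
          ⟨G.k, fun z ⟨G'', hT, hz⟩ => hz ▸ hbd G'' hT⟩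
          ⟨R.k, R, ⟨subset_rfl, ssubset_of_subset_of_ne hRG heq, hlt⟩, rfl⟩
      obtain ⟨hG'sub, hG'ss, hG'cond⟩ := hG'T
      have hxG' : x ∈ G'.toSet := hG'sub hxR
      have hmaxsub : G' ∈ maxSubcubes (gCond ω r' D a) G := by
        refine ⟨hG'ss, hG'cond, ?_⟩
        intro G'' hsub2 hss2 hcond2
        have hk2 : G''.k ≤ kk :=
          hkmax G''.k ⟨G'', ⟨hG'sub.trans hsub2, hss2, hcond2⟩, rfl⟩
        exact (dyadic_subset (hsub2 hxG') hxG' (le_of_le_of_eq hk2 hG'k.symm)).antisymm hsub2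
      have hG'fam : G' ∈ stopFam (gCond ω r' D a) Q0 :=
        Set.mem_iUnion.2 ⟨j + 1, ⟨G, hGj, hmaxsub⟩⟩
      exact hG'ss.not_subset (hmin G' hG'fam hG'sub)
  refine essSup_le_of_ae_le _ (Filter.Eventually.of_forall fun x => ?_)
  by_cases hS : (D.filter (fun Q =>
      IsPrincipal (stopFam (gCond ω r' D a) Q0) Q G ∧ x ∈ Q.toSet)).Nonempty
  · obtain ⟨Qx, hQxS, hQxmin⟩ := Finset.exists_min_image _ (fun Q : DyadicCube d => Q.k) hS
    rw [Finset.mem_filter] at hQxS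
    obtain ⟨hQxD, hQxP, hxQx⟩ := hQxS
    have h1 : lNorm r' (fun Q : DyadicCube d =>
        if Q ∈ D ∧ IsPrincipal (stopFam (gCond ω r' D a) Q0) Q G then gPC a Q x else 0)
        ≤ gTail r' D a Qx := by
      simp only [gTail]
      apply lNorm_mono
      intro Q
      by_cases hQ : Q ∈ D ∧ IsPrincipal (stopFam (gCond ω r' D a) Q0) Q G
      · rw [if_pos hQ]
        by_cases hx : x ∈ Q.toSet
        · have hQS : Q ∈ D.filter (fun Q =>
              IsPrincipal (stopFam (gCond ω r' D a) Q0) Q G ∧ x ∈ Q.toSet) :=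
            Finset.mem_filter.2 ⟨hQ.1, hQ.2, hx⟩
          have hsub := dyadic_subset hxQx hx (hQxmin Q hQS)
          rw [if_pos ⟨hQ.1, hsub⟩]
          simp only [gPC, Set.indicator_of_mem hx]
          exact le_rfl
        · simp only [gPC, Set.indicator_of_notMem hx]
          exact zero_le
      · rw [if_neg hQ]
        exact zero_le
    exact h1.trans (key Qx x hxQx hQxP)
  · have hz : (fun Q : DyadicCube d =>
        if Q ∈ D ∧ IsPrincipal (stopFam (gCond ω r' D a) Q0) Q G then gPC a Q x else 0)
        = fun _ => 0 := by
      funext Q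
      by_cases hQ : Q ∈ D ∧ IsPrincipal (stopFam (gCond ω r' D a) Q0) Q G
      · rw [if_pos hQ]
        by_cases hx : x ∈ Q.toSet
        · exact absurd ⟨Q, Finset.mem_filter.2 ⟨hQ.1, hQ.2, hx⟩⟩ hS
        · exact Set.indicator_of_notMem hx _
      · rw [if_neg hQ]
    have h0 : lNorm r' (fun Q : DyadicCube d =>
        if Q ∈ D ∧ IsPrincipal (stopFam (gCond ω r' D a) Q0) Q G then gPC a Q x else 0)
        = 0 := by
      rw [hz]; exact lNorm_zero' hr'
    exact h0.le.trans (zero_le)
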